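/- Let ε ≥ 0, let d ≥ 2 and N ≥ 2, and assume ε / log N ≤ 1/2. Let p and q be probability distributions on Fin d, let r be a probability distribution on Fin N, and suppose there exists a probability distribution s on Fin d × Fin N such that p ⊗ r ≻ s and ‖s − q ⊗ r‖ ≤ ε / log N. Then the Shannon entropies satisfy H₁(p) ≤ H₁(q) + ε + ε · (log d)/(log N) + h(ε / log N), where h(x) := −x·log x − (1−x)·log(1−x) is the binary entropy. -/

import Mathlib

open scoped BigOperators ENNReal Classical

noncomputable section

/-- A probability distribution on a finite type. -/
def IsProb {ι : Type*} [Fintype ι] (p : ι → ℝ) : Prop :=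
  (∀ i, 0 ≤ p i) ∧ ∑ i, p i = 1

/-- The decreasing rearrangement of a vector. -/
def descSort {k : ℕ} (x : Fin k → ℝ) : Fin k → ℝ :=
  fun i => x (Tuple.sort (fun j => - x j) i)

/-- `x` majorizes `y`: all partial sums of the decreasing rearrangement of `x`
dominate those of `y`, and the total sums coincide. -/
def MajorizesFin {k : ℕ} (x y : Fin k → ℝ) : Prop :=
  (∀ l : ℕ, ∑ i ∈ Finset.univ.filter (fun i : Fin k => (i : ℕ) < l), descSort y i
      ≤ ∑ i ∈ Finset.univ.filter (fun i : Fin k => (i : ℕ) < l), descSort x i) ∧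
  ∑ i, x i = ∑ i, y i

/-- Total variation distance between two vectors. -/
def tvDist {ι : Type*} [Fintype ι] (p q : ι → ℝ) : ℝ := (1 / 2) * ∑ i, |p i - q i|

/-- The Shannon entropy `H₁`. -/
def shannonH {ι : Type*} [Fintype ι] (p : ι → ℝ) : ℝ := - ∑ i, p i * Real.log (p i)

/-- The binary entropy function. -/
def binEnt (x : ℝ) : ℝ := -x * Real.log x - (1 - x) * Real.log (1 - x)

section Helpers
open Real Finset

lemma shannonH_eq {ι : Type*} [Fintype ι] (p : ι → ℝ) :
    shannonH p = ∑ i, negMulLog (p i) := by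
  simp [shannonH, negMulLog, Finset.sum_neg_distrib]

lemma binEnt_eq (x : ℝ) : binEnt x = negMulLog x + negMulLog (1 - x) := by
  simp [binEnt, negMulLog]; ring

lemma maxent {ι : Type*} [Fintype ι] (p : ι → ℝ) (h0 : ∀ i, 0 ≤ p i)
    (h1 : ∑ i, p i = 1) : ∑ i, negMulLog (p i) ≤ Real.log (Fintype.card ι) := by
  have hcard : 0 < Fintype.card ι := by
    by_contra h
    have : Fintype.card ι = 0 := by omega
    have he : IsEmpty ι := Fintype.card_eq_zero_iff.mp this
    rw [Finset.univ_eq_empty] at h1; simp at h1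
  set n : ℝ := (Fintype.card ι : ℝ) with hn
  have hnpos : (0:ℝ) < n := by rw [hn]; exact_mod_cast hcard
  have key : ∀ i, negMulLog (p i) ≤ 1 / n - p i + p i * Real.log n := by
    intro i
    rcases (h0 i).eq_or_lt with h | h
    · simp [← h]; positivity
    · have hlog := Real.log_le_sub_one_of_pos (show 0 < 1 / (p i * n) by positivity)
      rw [Real.log_div one_ne_zero (by positivity), Real.log_one,
        Real.log_mul h.ne' hnpos.ne'] at hlog
      have := mul_le_mul_of_nonneg_left hlog (h0 i)
      have he : p i * (1 / (p i * n) - 1) = 1 / n - p i := by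
        field_simp
      simp only [negMulLog]
      nlinarith
  calc ∑ i, negMulLog (p i) ≤ ∑ i, (1 / n - p i + p i * Real.log n) :=
        Finset.sum_le_sum fun i _ => key i
    _ = (Fintype.card ι : ℝ) * (1 / n) - 1 + Real.log n := by
        rw [Finset.sum_add_distrib, Finset.sum_sub_distrib, ← Finset.sum_mul, h1,
          Finset.sum_const, Finset.card_univ, nsmul_eq_mul]
        ring
    _ = Real.log n := by field_simp; rw [hn]; ring

lemma negMulLog_add_le {a b : ℝ} (ha : 0 ≤ a) (hb : 0 ≤ b) :
    negMulLog (a + b) ≤ negMulLog a + negMulLog b := by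
  rcases ha.eq_or_lt with h | h
  · simp [← h]
  rcases hb.eq_or_lt with h' | h'
  · simp [← h']
  have h1 : Real.log a ≤ Real.log (a + b) := Real.log_le_log h (by linarith)
  have h2 : Real.log b ≤ Real.log (a + b) := Real.log_le_log h' (by linarith)
  simp only [negMulLog]
  nlinarith

lemma tangent_ineq (s t : ℝ) (hs : 0 < s) (ht : 0 ≤ t) :
    negMulLog t - negMulLog s ≤ (-Real.log s - 1) * (t - s) := by
  rcases ht.eq_or_lt with h | h
  · simp [← h, negMulLog]; nlinarith
  have := Real.log_le_sub_one_of_pos (show 0 < s / t by positivity)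
  rw [Real.log_div hs.ne' h.ne'] at this
  simp only [negMulLog]
  have ht' : t ≠ 0 := h.ne'
  have : t * (Real.log s - Real.log t) ≤ t * (s / t - 1) :=
    mul_le_mul_of_nonneg_left this ht
  have h2 : t * (s / t - 1) = s - t := by field_simp
  nlinarith

lemma schur_neg_mul_log {k : ℕ} {x y : Fin k → ℝ} (hx : ∀ i, 0 ≤ x i) (hy : ∀ i, 0 ≤ y i)
    (h : MajorizesFin x y) : ∑ i, negMulLog (x i) ≤ ∑ i, negMulLog (y i) := by
  set u := descSort x with hu
  set v := descSort y with hv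
  have hu_anti : Antitone u := by
    intro i j hij
    have := Tuple.monotone_sort (fun j => - x j) hij
    simpa [hu, descSort] using this
  have hv_anti : Antitone v := by
    intro i j hij
    have := Tuple.monotone_sort (fun j => - y j) hij
    simpa [hv, descSort] using this
  have hu0 : ∀ i, 0 ≤ u i := fun i => hx _
  have hv0 : ∀ i, 0 ≤ v i := fun i => hy _
  set U : ℕ → ℝ := fun n => if h : n < k then u ⟨n, h⟩ else 0 with hU
  set V : ℕ → ℝ := fun n => if h : n < k then v ⟨n, h⟩ else 0 with hV
  have hU0 : ∀ n, 0 ≤ U n := by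
    intro n; rw [hU]; dsimp only; split
    · exact hu0 _
    · exact le_refl 0
  have hV0 : ∀ n, 0 ≤ V n := by
    intro n; rw [hV]; dsimp only; split
    · exact hv0 _
    · exact le_refl 0
  -- conversion between range-sums and filter-sums
  have conv : ∀ (w : Fin k → ℝ) (l : ℕ),
      ∑ n ∈ Finset.range l, (if h : n < k then w ⟨n, h⟩ else 0)
        = ∑ i ∈ Finset.univ.filter (fun i : Fin k => (i : ℕ) < l), w i := by
    intro w l
    rw [Finset.sum_filter]
    have e1 : ∑ i : Fin k, (if (i : ℕ) < l then w i else 0)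
        = ∑ n ∈ Finset.range k, (if n < l then (if h : n < k then w ⟨n, h⟩ else 0) else 0) := by
      rw [← Fin.sum_univ_eq_sum_range (fun n => if n < l then (if h : n < k then w ⟨n, h⟩ else 0) else 0) k]
      refine Finset.sum_congr rfl fun i _ => ?_
      rw [dif_pos i.isLt]
    rw [e1]
    rcases le_total l k with hlk | hkl
    · rw [← Finset.sum_filter]
      apply Finset.sum_congr _ (fun _ _ => rfl)
      ext m
      simp only [Finset.mem_filter, Finset.mem_range]
      omega
    · have h2 : ∑ n ∈ Finset.range l, (if h : n < k then w ⟨n, h⟩ else 0)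
          = ∑ n ∈ Finset.range k, (if h : n < k then w ⟨n, h⟩ else 0) := by
        symm
        apply Finset.sum_subset (Finset.range_subset_range.2 hkl)
        intro m _ hm
        rw [Finset.mem_range] at hm
        rw [dif_neg hm]
      rw [h2]
      refine Finset.sum_congr rfl fun n hn => ?_
      rw [Finset.mem_range] at hn
      rw [if_pos (lt_of_lt_of_le hn hkl)]
  have hpart : ∀ l, ∑ n ∈ Finset.range l, V n ≤ ∑ n ∈ Finset.range l, U n := by
    intro l
    rw [hU, hV]
    rw [conv (fun i => u i) l, conv (fun i => v i) l]
    exact h.1 l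
  have huniv : Finset.univ.filter (fun i : Fin k => (i : ℕ) < k) = Finset.univ := by
    ext i; simp [i.isLt]
  have sumu : ∑ i, u i = ∑ i, x i := Equiv.sum_comp (Tuple.sort (fun j => - x j)) x
  have sumv : ∑ i, v i = ∑ i, y i := Equiv.sum_comp (Tuple.sort (fun j => - y j)) y
  have htotU : ∑ n ∈ Finset.range k, U n = ∑ i, x i := by
    rw [hU, conv (fun i => u i) k, huniv]; exact sumu
  have htotV : ∑ n ∈ Finset.range k, V n = ∑ i, y i := by
    rw [hV, conv (fun i => v i) k, huniv]; exact sumv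
  have htot : ∑ n ∈ Finset.range k, U n = ∑ n ∈ Finset.range k, V n := by
    rw [htotU, htotV]; exact h.2
  -- tail lemmas
  have hVtail : ∀ n, V n = 0 → ∀ m, n ≤ m → V m = 0 := by
    intro n hVn m hm
    by_cases hmk : m < k
    · have hnk : n < k := lt_of_le_of_lt hm hmk
      have h1 : v ⟨m, hmk⟩ ≤ v ⟨n, hnk⟩ := hv_anti (by exact hm)
      have h2 : V n = v ⟨n, hnk⟩ := by rw [hV]; exact dif_pos hnk
      have h3 : V m = v ⟨m, hmk⟩ := by rw [hV]; exact dif_pos hmk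
      have := hv0 ⟨m, hmk⟩
      rw [h3]; rw [h2] at hVn; linarith
    · rw [hV]; exact dif_neg hmk
  have hzero : ∀ n, V n = 0 → U n = 0 := by
    intro n hVn
    by_cases hnk : n < k
    swap
    · rw [hU]; exact dif_neg hnk
    have hsplit : ∑ m ∈ Finset.range k, V m = ∑ m ∈ Finset.range n, V m := by
      symm
      apply Finset.sum_subset (Finset.range_subset_range.2 hnk.le)
      intro m _ hm
      rw [Finset.mem_range, not_lt] at hm
      exact hVtail n hVn m hm
    have h1 : ∑ m ∈ Finset.range k, U m ≤ ∑ m ∈ Finset.range n, U m := by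
      calc ∑ m ∈ Finset.range k, U m = ∑ m ∈ Finset.range n, V m := by rw [htot, hsplit]
        _ ≤ ∑ m ∈ Finset.range n, U m := hpart n
    have h2 : ∑ m ∈ Finset.range n, U m + ∑ m ∈ Finset.Ico n k, U m
        = ∑ m ∈ Finset.range k, U m := by
      simp only [Finset.range_eq_Ico]
      exact Finset.sum_Ico_consecutive _ (Nat.zero_le n) hnk.le
    have h3 : ∑ m ∈ Finset.Ico n k, U m ≤ 0 := by linarith
    have h4 : ∑ m ∈ Finset.Ico n k, U m = 0 :=
      le_antisymm h3 (Finset.sum_nonneg fun m _ => hU0 m)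
    have h5 := (Finset.sum_eq_zero_iff_of_nonneg fun m _ => hU0 m).1 h4
    exact h5 n (Finset.mem_Ico.2 ⟨le_refl n, hnk⟩)
  -- the tangent bound termwise
  set C : ℕ → ℝ := fun n => -Real.log (V n) - 1 with hC
  set D : ℕ → ℝ := fun n => U n - V n with hD
  have hterm : ∀ n, negMulLog (U n) - negMulLog (V n) ≤ C n * D n := by
    intro n
    rcases (hV0 n).eq_or_lt with hvn | hvn
    · have hun := hzero n hvn.symm
      rw [hun, ← hvn, hD]
      simp [← hvn, hun]
    · exact tangent_ineq (V n) (U n) hvn (hU0 n)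
  -- partial sums of D
  set S : ℕ → ℝ := fun l => ∑ n ∈ Finset.range l, D n with hS
  have hS0 : ∀ l, 0 ≤ S l := by
    intro l
    rw [hS]; dsimp only
    rw [hD]; dsimp only
    rw [Finset.sum_sub_distrib]
    have := hpart l
    linarith
  have hSk : S k = 0 := by
    rw [hS]; dsimp only; rw [hD]; dsimp only
    rw [Finset.sum_sub_distrib]
    rw [htot]; ring
  -- Abel summation
  have habel : ∑ n ∈ Finset.range k, C n * D n
      = C (k - 1) * S k - ∑ n ∈ Finset.range (k - 1), (C (n + 1) - C n) * S (n + 1) := by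
    have := Finset.sum_range_by_parts C D k
    simpa [smul_eq_mul, hS] using this
  have hsum_nonpos : ∑ n ∈ Finset.range k, C n * D n ≤ 0 := by
    rw [habel, hSk, mul_zero, zero_sub, neg_nonpos]
    apply Finset.sum_nonneg
    intro n hn
    rw [Finset.mem_range] at hn
    have hn1 : n + 1 < k := by omega
    rcases (hV0 (n + 1)).eq_or_lt with hvn | hvn
    · have : S (n + 1) = 0 := by
        have hsplit : S k = S (n + 1) + ∑ m ∈ Finset.Ico (n + 1) k, D m := by
          rw [hS]; dsimp only
          simp only [Finset.range_eq_Ico]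
          exact (Finset.sum_Ico_consecutive _ (Nat.zero_le _) hn1.le).symm
        have hDz : ∀ m ∈ Finset.Ico (n + 1) k, D m = 0 := by
          intro m hm
          rw [Finset.mem_Ico] at hm
          have hVm : V m = 0 := hVtail (n + 1) hvn.symm m hm.1
          have hUm : U m = 0 := hzero m hVm
          rw [hD]; dsimp only; rw [hVm, hUm]; ring
        rw [Finset.sum_eq_zero hDz, add_zero] at hsplit
        rw [← hsplit, hSk]
      rw [this, mul_zero]
    · -- V (n+1) > 0, so C is monotone at this step
      have hnk : n < k := by omega
      have hvle : v ⟨n + 1, hn1⟩ ≤ v ⟨n, hnk⟩ := hv_anti (by simp)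
      have hVn1 : V (n + 1) = v ⟨n + 1, hn1⟩ := by rw [hV]; exact dif_pos hn1
      have hVn : V n = v ⟨n, hnk⟩ := by rw [hV]; exact dif_pos hnk
      have hpos : 0 < V (n + 1) := hvn
      have hposn : 0 < V n := by rw [hVn]; rw [hVn1] at hpos; linarith
      have hlog : Real.log (V (n + 1)) ≤ Real.log (V n) := by
        apply Real.log_le_log hpos
        rw [hVn1, hVn]; exact hvle
      have hCmono : 0 ≤ C (n + 1) - C n := by rw [hC]; dsimp only; linarith
      exact mul_nonneg hCmono (hS0 (n + 1))
  -- put it together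
  have sum_eq_U : ∑ n ∈ Finset.range k, negMulLog (U n) = ∑ i, negMulLog (x i) := by
    rw [← Fin.sum_univ_eq_sum_range (fun n => negMulLog (U n)) k]
    have : ∀ i : Fin k, negMulLog (U i) = negMulLog (u i) := by
      intro i; rw [hU]; dsimp only; rw [dif_pos i.isLt]
    rw [Finset.sum_congr rfl (fun i _ => this i)]
    exact Equiv.sum_comp (Tuple.sort (fun j => - x j)) (fun i => negMulLog (x i))
  have sum_eq_V : ∑ n ∈ Finset.range k, negMulLog (V n) = ∑ i, negMulLog (y i) := by
    rw [← Fin.sum_univ_eq_sum_range (fun n => negMulLog (V n)) k]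
    have : ∀ i : Fin k, negMulLog (V i) = negMulLog (v i) := by
      intro i; rw [hV]; dsimp only; rw [dif_pos i.isLt]
    rw [Finset.sum_congr rfl (fun i _ => this i)]
    exact Equiv.sum_comp (Tuple.sort (fun j => - y j)) (fun i => negMulLog (y i))
  have final : ∑ n ∈ Finset.range k, negMulLog (U n) - ∑ n ∈ Finset.range k, negMulLog (V n) ≤ 0 := by
    rw [← Finset.sum_sub_distrib]
    calc ∑ n ∈ Finset.range k, (negMulLog (U n) - negMulLog (V n))
        ≤ ∑ n ∈ Finset.range k, C n * D n := Finset.sum_le_sum fun n _ => hterm n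
      _ ≤ 0 := hsum_nonpos
  rw [sum_eq_U, sum_eq_V] at final
  linarith

lemma fannes_one_sided {ι : Type*} [Fintype ι] (p q : ι → ℝ)
    (hp : IsProb p) (hq : IsProb q) (hT : tvDist p q ≤ 1 / 2) :
    shannonH p ≤ shannonH q + tvDist p q * Real.log (Fintype.card ι)
      + binEnt (tvDist p q) := by
  obtain ⟨hp0, hp1⟩ := hp
  obtain ⟨hq0, hq1⟩ := hq
  set T := tvDist p q with hTdef
  set m : ι → ℝ := fun i => min (p i) (q i) with hm
  have hm0 : ∀ i, 0 ≤ m i := fun i => le_min (hp0 i) (hq0 i)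
  have hmp : ∀ i, m i ≤ p i := fun i => min_le_left _ _
  have hmq : ∀ i, m i ≤ q i := fun i => min_le_right _ _
  have habs : ∀ i, |p i - q i| = p i + q i - 2 * m i := by
    intro i
    rcases le_total (p i) (q i) with h | h
    · rw [abs_of_nonpos (by linarith), hm]; dsimp only; rw [min_eq_left h]; ring
    · rw [abs_of_nonneg (by linarith), hm]; dsimp only; rw [min_eq_right h]; ring
  have hmsum : ∑ i, m i = 1 - T := by
    have : T = (1/2) * ∑ i, (p i + q i - 2 * m i) := by
      rw [hTdef, tvDist]
      congr 1
      exact Finset.sum_congr rfl fun i _ => habs i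
    rw [Finset.sum_sub_distrib, Finset.sum_add_distrib, hp1, hq1, ← Finset.mul_sum] at this
    linarith
  have hT0 : 0 ≤ T := by
    rw [hTdef, tvDist]
    positivity
  rcases hT0.eq_or_lt with hTz | hTpos
  · -- T = 0 : p = q
    have hmeq : ∑ i, (p i - m i) = 0 := by
      rw [Finset.sum_sub_distrib, hp1, hmsum, ← hTz]; ring
    have hpm : ∀ i, p i = m i := by
      intro i
      have := (Finset.sum_eq_zero_iff_of_nonneg
        (fun i _ => by linarith [hmp i] : ∀ i ∈ Finset.univ, 0 ≤ p i - m i)).1 hmeq i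
        (Finset.mem_univ i)
      linarith
    have hmeq' : ∑ i, (q i - m i) = 0 := by
      rw [Finset.sum_sub_distrib, hq1, hmsum, ← hTz]; ring
    have hqm : ∀ i, q i = m i := by
      intro i
      have := (Finset.sum_eq_zero_iff_of_nonneg
        (fun i _ => by linarith [hmq i] : ∀ i ∈ Finset.univ, 0 ≤ q i - m i)).1 hmeq' i
        (Finset.mem_univ i)
      linarith
    have : p = q := funext fun i => by rw [hpm i, hqm i]
    rw [this, ← hTz]
    simp [binEnt]
  · -- T > 0
    have h1T : 0 < 1 - T := by linarith
    -- upper bound on H(p)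
    have hub : shannonH p ≤ ∑ i, negMulLog (m i) + negMulLog T + T * Real.log (Fintype.card ι) := by
      have step1 : shannonH p ≤ ∑ i, negMulLog (m i) + ∑ i, negMulLog (p i - m i) := by
        rw [shannonH_eq, ← Finset.sum_add_distrib]
        apply Finset.sum_le_sum
        intro i _
        have := negMulLog_add_le (hm0 i) (by linarith [hmp i] : 0 ≤ p i - m i)
        calc negMulLog (p i) = negMulLog (m i + (p i - m i)) := by ring_nf
          _ ≤ _ := this
      have step2 : ∑ i, negMulLog (p i - m i) ≤ negMulLog T + T * Real.log (Fintype.card ι) := by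
        set a : ι → ℝ := fun i => (p i - m i) / T with ha
        have ha0 : ∀ i, 0 ≤ a i := fun i => div_nonneg (by linarith [hmp i]) hT0
        have hasum : ∑ i, a i = 1 := by
          rw [ha]
          dsimp only
          rw [← Finset.sum_div, Finset.sum_sub_distrib, hp1, hmsum]
          field_simp
          ring
        have hkey : ∀ i, negMulLog (p i - m i) = a i * negMulLog T + T * negMulLog (a i) := by
          intro i
          have : p i - m i = T * a i := by
            rw [ha]; dsimp only; field_simp
          rw [this, negMulLog_mul]
        rw [Finset.sum_congr rfl fun i _ => hkey i, Finset.sum_add_distrib,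
          ← Finset.sum_mul, hasum, one_mul, ← Finset.mul_sum]
        have := maxent a ha0 hasum
        have := mul_le_mul_of_nonneg_left this hT0
        linarith
      linarith
    -- lower bound on H(q)
    have hlb : ∑ i, negMulLog (m i) + (1 - T) * Real.log (1 - T) ≤ shannonH q := by
      have key : ∀ i, negMulLog (m i) + m i * Real.log (1 - T) ≤ negMulLog (q i) := by
        intro i
        have hbi : q i - m i ≤ T := by
          have hle : ∀ j ∈ Finset.univ, 0 ≤ q j - m j := fun j _ => by linarith [hmq j]
          have := Finset.single_le_sum hle (Finset.mem_univ i)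
          have hsum : ∑ j, (q j - m j) = T := by
            rw [Finset.sum_sub_distrib, hq1, hmsum]; ring
          linarith
        have hconc := concaveOn_negMulLog.2 (Set.mem_Ici.2 (div_nonneg (hm0 i) h1T.le))
          (Set.mem_Ici.2 (show (0:ℝ) ≤ (q i - m i) / T from div_nonneg (by linarith [hmq i]) hT0))
          (le_of_lt h1T) (le_of_lt hTpos) (by ring : (1 - T) + T = 1)
        have heq : (1 - T) • (m i / (1 - T)) + T • ((q i - m i) / T) = q i := by
          simp only [smul_eq_mul]
          field_simp
          ring
        rw [heq] at hconc
        have hb1 : (q i - m i) / T ≤ 1 := by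
          rw [div_le_one hTpos]; linarith
        have hnn : 0 ≤ negMulLog ((q i - m i) / T) :=
          negMulLog_nonneg (div_nonneg (by linarith [hmq i]) hT0) hb1
        have hscale : (1 - T) * negMulLog (m i / (1 - T))
            = negMulLog (m i) + m i * Real.log (1 - T) := by
          rcases (hm0 i).eq_or_lt with hz | hz
          · rw [← hz]; simp
          · simp only [negMulLog]
            rw [Real.log_div hz.ne' h1T.ne']
            field_simp
            ring
        simp only [smul_eq_mul] at hconc
        rw [hscale] at hconc
        nlinarith [hconc]
      calc ∑ i, negMulLog (m i) + (1 - T) * Real.log (1 - T)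
          = ∑ i, (negMulLog (m i) + m i * Real.log (1 - T)) := by
            rw [Finset.sum_add_distrib, ← Finset.sum_mul, hmsum]
        _ ≤ ∑ i, negMulLog (q i) := Finset.sum_le_sum fun i _ => key i
        _ = shannonH q := (shannonH_eq q).symm
    rw [binEnt_eq]
    have : negMulLog (1 - T) = -((1 - T) * Real.log (1 - T)) := by
      simp [negMulLog]; ring
    linarith

lemma sum_negMulLog_prod {ι κ : Type*} [Fintype ι] [Fintype κ] (p : ι → ℝ) (r : κ → ℝ)
    (hp1 : ∑ i, p i = 1) (hr1 : ∑ j, r j = 1) :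
    ∑ z : ι × κ, Real.negMulLog (p z.1 * r z.2)
      = ∑ i, Real.negMulLog (p i) + ∑ j, Real.negMulLog (r j) := by
  rw [Fintype.sum_prod_type]
  calc ∑ i, ∑ j, Real.negMulLog (p i * r j)
      = ∑ i, ∑ j, (r j * Real.negMulLog (p i) + p i * Real.negMulLog (r j)) := by
        refine Finset.sum_congr rfl fun i _ => Finset.sum_congr rfl fun j _ => ?_
        exact Real.negMulLog_mul (p i) (r j)
    _ = ∑ i, (Real.negMulLog (p i) + p i * (∑ j, Real.negMulLog (r j))) := by
        refine Finset.sum_congr rfl fun i _ => ?_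
        rw [Finset.sum_add_distrib, ← Finset.sum_mul, hr1, one_mul, ← Finset.mul_sum]
    _ = ∑ i, Real.negMulLog (p i) + ∑ j, Real.negMulLog (r j) := by
        rw [Finset.sum_add_distrib, ← Finset.sum_mul, hp1, one_mul]

end Helpers

/-- if `p ⊗ r` majorizes a state `s` which is `ε/log N`-close to
`q ⊗ r` in total variation, where the catalyst `r` has dimension `N`, then the
Shannon entropies satisfy
`H₁(p) ≤ H₁(q) + ε + ε·(log d)/(log N) + h(ε/log N)`. -/

theorem catalytic_majorization_entropy_bound (ε : ℝ) (hε : 0 ≤ ε)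
    (d N : ℕ) (hd : 2 ≤ d) (hN : 2 ≤ N)
    (hsmall : ε / Real.log N ≤ 1 / 2)
    (p q : Fin d → ℝ) (hp : IsProb p) (hq : IsProb q)
    (r : Fin N → ℝ) (hr : IsProb r)
    (s : Fin d × Fin N → ℝ) (hs : IsProb s)
    (hmaj : MajorizesFin
      (fun t : Fin (d * N) => p (finProdFinEquiv.symm t).1 * r (finProdFinEquiv.symm t).2)
      (fun t : Fin (d * N) => s (finProdFinEquiv.symm t)))
    (hclose : tvDist s (fun x : Fin d × Fin N => q x.1 * r x.2) ≤ ε / Real.log N) :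
    shannonH p ≤ shannonH q + ε + ε * Real.log d / Real.log N + binEnt (ε / Real.log N) := by
  classical
  have hN0 : (0:ℝ) < Real.log N := Real.log_pos (by exact_mod_cast hN)
  set δ : ℝ := ε / Real.log N with hδdef
  have hδ0 : 0 ≤ δ := div_nonneg hε hN0.le
  obtain ⟨hp0, hp1⟩ := hp
  obtain ⟨hq0, hq1⟩ := hq
  obtain ⟨hr0, hr1⟩ := hr
  -- entropies as negMulLog sums
  have hHp := shannonH_eq p
  have hHq := shannonH_eq q
  have hHr := shannonH_eq r
  -- Step 1: Schur concavity applied to the majorization hypothesis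
  have hx0 : ∀ t : Fin (d * N),
      0 ≤ p (finProdFinEquiv.symm t).1 * r (finProdFinEquiv.symm t).2 :=
    fun t => mul_nonneg (hp0 _) (hr0 _)
  have hy0 : ∀ t : Fin (d * N), 0 ≤ s (finProdFinEquiv.symm t) := fun t => hs.1 _
  have hschur := schur_neg_mul_log hx0 hy0 hmaj
  -- rewrite both sides via the equivalence
  have hxsum : ∑ t : Fin (d * N),
      Real.negMulLog (p (finProdFinEquiv.symm t).1 * r (finProdFinEquiv.symm t).2)
      = ∑ z : Fin d × Fin N, Real.negMulLog (p z.1 * r z.2) :=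
    Equiv.sum_comp finProdFinEquiv.symm (fun z => Real.negMulLog (p z.1 * r z.2))
  have hysum : ∑ t : Fin (d * N), Real.negMulLog (s (finProdFinEquiv.symm t))
      = ∑ z : Fin d × Fin N, Real.negMulLog (s z) :=
    Equiv.sum_comp finProdFinEquiv.symm (fun z => Real.negMulLog (s z))
  rw [hxsum, hysum] at hschur
  rw [sum_negMulLog_prod p r hp1 hr1] at hschur
  -- Step 2: Fannes on Fin d × Fin N
  set qr : Fin d × Fin N → ℝ := fun z => q z.1 * r z.2 with hqr
  have hqrProb : IsProb qr := by
    constructor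
    · intro z; exact mul_nonneg (hq0 _) (hr0 _)
    · rw [hqr]
      rw [Fintype.sum_prod_type]
      simp only [← Finset.mul_sum]
      rw [← Finset.sum_mul, hq1, hr1, one_mul]
  set T : ℝ := tvDist s qr with hTdef
  have hTδ : T ≤ δ := hclose
  have hT0 : 0 ≤ T := by
    rw [hTdef, tvDist]; positivity
  have hfannes := fannes_one_sided s qr hs hqrProb (by linarith)
  have hcard : (Fintype.card (Fin d × Fin N) : ℝ) = (d : ℝ) * (N : ℝ) := by
    simp [Fintype.card_prod]
  have hHqr : shannonH qr = shannonH q + shannonH r := by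
    rw [shannonH_eq, hqr, sum_negMulLog_prod q r hq1 hr1, hHq, hHr]
  have hHs : shannonH s = ∑ z : Fin d × Fin N, Real.negMulLog (s z) := shannonH_eq s
  -- log of the dimension
  have hd0 : (0:ℝ) < (d:ℝ) := by positivity
  have hN0' : (0:ℝ) < (N:ℝ) := by positivity
  have hlogdN : Real.log ((Fintype.card (Fin d × Fin N) : ℝ))
      = Real.log d + Real.log N := by
    rw [hcard, Real.log_mul hd0.ne' hN0'.ne']
  have hlogd0 : 0 ≤ Real.log d := Real.log_nonneg (by exact_mod_cast Nat.one_le_of_lt hd)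
  have hlogdN0 : 0 ≤ Real.log ((Fintype.card (Fin d × Fin N) : ℝ)) := by
    rw [hlogdN]; linarith
  -- monotonicity in T : T * L + binEnt T ≤ δ * L + binEnt δ
  have hbinmono : binEnt T ≤ binEnt δ := by
    have h1 : binEnt T = Real.binEntropy T := by
      rw [binEnt_eq, Real.binEntropy_eq_negMulLog_add_negMulLog_one_sub]
    have h2 : binEnt δ = Real.binEntropy δ := by
      rw [binEnt_eq, Real.binEntropy_eq_negMulLog_add_negMulLog_one_sub]
    rw [h1, h2]
    rcases hTδ.eq_or_lt with h | h
    · rw [h]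
    · exact (Real.binEntropy_strictMonoOn
        (Set.mem_Icc.2 ⟨hT0, by rw [show (2:ℝ)⁻¹ = 1/2 by norm_num]; linarith⟩)
        (Set.mem_Icc.2 ⟨hδ0, by rw [show (2:ℝ)⁻¹ = 1/2 by norm_num]; exact hsmall⟩) h).le
  have hTL : T * Real.log ((Fintype.card (Fin d × Fin N) : ℝ))
      ≤ δ * Real.log ((Fintype.card (Fin d × Fin N) : ℝ)) :=
    mul_le_mul_of_nonneg_right hTδ hlogdN0
  -- arithmetic: δ * (log d + log N) = ε * log d / log N + ε
  have hδlog : δ * (Real.log d + Real.log N) = ε * Real.log d / Real.log N + ε := by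
    rw [hδdef]
    field_simp
  -- combine everything
  have hchain : shannonH p + shannonH r ≤ shannonH q + shannonH r
      + δ * (Real.log d + Real.log N) + binEnt δ := by
    calc shannonH p + shannonH r
        = ∑ i, Real.negMulLog (p i) + ∑ j, Real.negMulLog (r j) := by rw [hHp, hHr]
      _ ≤ ∑ z : Fin d × Fin N, Real.negMulLog (s z) := hschur
      _ = shannonH s := hHs.symm
      _ ≤ shannonH qr + T * Real.log ((Fintype.card (Fin d × Fin N) : ℝ)) + binEnt T :=
          hfannes
      _ ≤ shannonH qr + δ * Real.log ((Fintype.card (Fin d × Fin N) : ℝ)) + binEnt δ := by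
          linarith
      _ = shannonH q + shannonH r + δ * (Real.log d + Real.log N) + binEnt δ := by
          rw [hHqr, hlogdN]
  rw [hδlog] at hchain
  linarith

end
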